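/- arXiv:2004.10847 — 7 statements merged into one kernel-verified Lean document; each statement's English description precedes it below -/
import Mathlib

section
/- Let x, x_d : ℝ → ℝⁿ be twice differentiable curves, let K_P and K_D be symmetric positive definite real n×n matrices, and let w : ℝ → ℝⁿ be continuous. Suppose the closed-loop dynamics satisfy ẍ(t) = ẍ_d(t) − K_D·(ẋ(t) − ẋ_d(t)) − K_P·∫₀ᵗ (ẋ(u) − ẋ_d(u)) du + w(t) for all t. Then the Lyapunov function V(t) = (1/2)‖ẋ(t) − ẋ_d(t)‖² + (1/2)⟨∫₀ᵗ (ẋ(u) − ẋ_d(u)) du, K_P·∫₀ᵗ (ẋ(u) − ẋ_d(u)) du⟩ is differentiable with V′(t) = −⟨ẋ(t) − ẋ_d(t), K_D·(ẋ(t) − ẋ_d(t))⟩ + ⟨ẋ(t) − ẋ_d(t), w(t)⟩ for every t. -/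
open scoped RealInnerProductSpace

/-- Vector closed loop `ẍ = ẍ_d − K_D ẋ̃ − K_P ∫₀ᵗ ẋ̃ + w` with symmetric positive
definite gains: the Lyapunov function
`V(t) = (1/2)‖ẋ̃(t)‖² + (1/2)⟨∫₀ᵗ ẋ̃, K_P ∫₀ᵗ ẋ̃⟩` is differentiable with
`V′(t) = −⟨ẋ̃(t), K_D ẋ̃(t)⟩ + ⟨ẋ̃(t), w(t)⟩`. -/
theorem stmt2 (n : ℕ) (x xd : ℝ → EuclideanSpace ℝ (Fin n))
    (KP KD : Matrix (Fin n) (Fin n) ℝ)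
    (w : ℝ → EuclideanSpace ℝ (Fin n))
    (hx : Differentiable ℝ x) (hx' : Differentiable ℝ (deriv x))
    (hxd : Differentiable ℝ xd) (hxd' : Differentiable ℝ (deriv xd))
    (hKPsymm : KP.IsSymm) (hKP : KP.PosDef)
    (hKDsymm : KD.IsSymm) (hKD : KD.PosDef)
    (hw : Continuous w)
    (e z : ℝ → EuclideanSpace ℝ (Fin n))
    (he : ∀ t, e t = deriv x t - deriv xd t)
    (hz : ∀ t, z t = ∫ s in (0:ℝ)..t, e s)
    (hdyn : ∀ t, deriv (deriv x) t = deriv (deriv xd) t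
        - Matrix.toEuclideanLin KD (e t) - Matrix.toEuclideanLin KP (z t) + w t)
    (V : ℝ → ℝ)
    (hV : ∀ t, V t = (1/2) * ‖e t‖^2
        + (1/2) * ⟪z t, Matrix.toEuclideanLin KP (z t)⟫) :
    Differentiable ℝ V ∧
      ∀ t, deriv V t = -⟪e t, Matrix.toEuclideanLin KD (e t)⟫ + ⟪e t, w t⟫ := by
  have heq : e = fun t => deriv x t - deriv xd t := funext he
  have he_diff : Differentiable ℝ e := heq ▸ hx'.sub hxd'
  have he_cont : Continuous e := he_diff.continuous
  -- derivative of e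
  have he_deriv : ∀ t, HasDerivAt e
      (- Matrix.toEuclideanLin KD (e t) - Matrix.toEuclideanLin KP (z t) + w t) t := by
    intro t
    have h1 : HasDerivAt e (deriv (deriv x) t - deriv (deriv xd) t) t := by
      rw [heq]
      exact ((hx' t).hasDerivAt).sub ((hxd' t).hasDerivAt)
    have : deriv (deriv x) t - deriv (deriv xd) t
        = - Matrix.toEuclideanLin KD (e t) - Matrix.toEuclideanLin KP (z t) + w t := by
      rw [hdyn t]; abel
    rwa [this] at h1
  -- derivative of z
  have hz_deriv : ∀ t, HasDerivAt z (e t) t := by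
    intro t
    have := (he_cont.integral_hasStrictDerivAt 0 t).hasDerivAt
    have hzz : z = fun u => ∫ s in (0:ℝ)..u, e s := funext hz
    rw [hzz]
    exact this
  -- KP symmetric as a linear map
  have hKPsym : (Matrix.toEuclideanLin KP).IsSymmetric := by
    rw [← Matrix.isHermitian_iff_isSymmetric]
    exact hKPsymm
  have key : ∀ t, HasDerivAt V
      (-⟪e t, Matrix.toEuclideanLin KD (e t)⟫ + ⟪e t, w t⟫) t := by
    intro t
    have hVeq : V = fun t => (1/2) * ⟪e t, e t⟫
        + (1/2) * ⟪z t, Matrix.toEuclideanLin KP (z t)⟫ := by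
      funext u
      rw [hV u, real_inner_self_eq_norm_sq]
    have hAz : HasDerivAt (fun u => Matrix.toEuclideanLin KP (z u))
        (Matrix.toEuclideanLin KP (e t)) t :=
      ((Matrix.toEuclideanLin KP).toContinuousLinearMap.hasFDerivAt.comp_hasDerivAt
        t (hz_deriv t))
    have h1 : HasDerivAt (fun u => ⟪e u, e u⟫)
        (⟪e t, - Matrix.toEuclideanLin KD (e t) - Matrix.toEuclideanLin KP (z t) + w t⟫
          + ⟪- Matrix.toEuclideanLin KD (e t) - Matrix.toEuclideanLin KP (z t) + w t, e t⟫) t :=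
      (he_deriv t).inner ℝ (he_deriv t)
    have h2 : HasDerivAt (fun u => ⟪z u, Matrix.toEuclideanLin KP (z u)⟫)
        (⟪z t, Matrix.toEuclideanLin KP (e t)⟫ + ⟪e t, Matrix.toEuclideanLin KP (z t)⟫) t :=
      (hz_deriv t).inner ℝ hAz
    have h3 := ((h1.const_mul ((1:ℝ)/2)).add (h2.const_mul ((1:ℝ)/2)))
    rw [show ((fun y => (1:ℝ) / 2 * ⟪e y, e y⟫) + fun y => 1 / 2 * ⟪z y, Matrix.toEuclideanLin KP (z y)⟫) = V from hVeq.symm] at h3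
    have hsymz : ⟪z t, Matrix.toEuclideanLin KP (e t)⟫ = ⟪e t, Matrix.toEuclideanLin KP (z t)⟫ := by
      rw [← hKPsym (z t) (e t)]
      exact real_inner_comm _ _
    have : (1/2) * (⟪e t, - Matrix.toEuclideanLin KD (e t) - Matrix.toEuclideanLin KP (z t) + w t⟫
          + ⟪- Matrix.toEuclideanLin KD (e t) - Matrix.toEuclideanLin KP (z t) + w t, e t⟫)
        + (1/2) * (⟪z t, Matrix.toEuclideanLin KP (e t)⟫ + ⟪e t, Matrix.toEuclideanLin KP (z t)⟫)
        = -⟪e t, Matrix.toEuclideanLin KD (e t)⟫ + ⟪e t, w t⟫ := by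
      rw [hsymz]
      simp only [inner_add_right, inner_sub_right, inner_neg_right,
        inner_add_left, inner_sub_left, inner_neg_left,
        real_inner_comm (w t) (e t),
        real_inner_comm (Matrix.toEuclideanLin KD (e t)) (e t),
        real_inner_comm (Matrix.toEuclideanLin KP (z t)) (e t)]
      ring
    rwa [this] at h3
  exact ⟨fun t => (key t).differentiableAt, fun t => (key t).deriv⟩
end

section
/- Let x, x_d : ℝ → ℝⁿ be twice differentiable curves, let K_P and K_D be symmetric positive definite real n×n matrices, let λ > 0 satisfy ⟨v, K_P v⟩ ≥ λ‖v‖² for all v ∈ ℝⁿ, and let w : ℝ → ℝⁿ be continuous. Suppose ẍ(t) = ẍ_d(t) − K_D·(ẋ(t) − ẋ_d(t)) − K_P·∫₀ᵗ (ẋ(u) − ẋ_d(u)) du + w(t) for all t, and that the interaction is helpful for all time: ⟨ẋ(t) − ẋ_d(t), w(t)⟩ ≤ 0 for every t ≥ 0. Then the Lyapunov function V(t) = (1/2)‖ẋ(t) − ẋ_d(t)‖² + (1/2)⟨∫₀ᵗ (ẋ(u) − ẋ_d(u)) du, K_P·∫₀ᵗ (ẋ(u) − ẋ_d(u)) du⟩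 is nonincreasing on [0, ∞), and the trajectories are globally bounded: for every t ≥ 0, ‖ẋ(t) − ẋ_d(t)‖² ≤ ‖ẋ(0) − ẋ_d(0)‖² and λ·‖∫₀ᵗ (ẋ(u) − ẋ_d(u)) du‖² ≤ ‖ẋ(0) − ẋ_d(0)‖². -/
open scoped RealInnerProductSpace

/-- Vector closed loop `ẍ = ẍ_d − K_D ẋ̃ − K_P ∫₀ᵗ ẋ̃ + w` with symmetric positive
definite gains and `⟨v, K_P v⟩ ≥ λ‖v‖²`: if the interaction is helpful for all time
(`⟨ẋ̃(t), w(t)⟩ ≤ 0` for `t ≥ 0`), then the Lyapunov function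
`V(t) = (1/2)‖ẋ̃(t)‖² + (1/2)⟨∫₀ᵗ ẋ̃, K_P ∫₀ᵗ ẋ̃⟩` is nonincreasing on `[0,∞)` and the
trajectories are globally bounded: `‖ẋ̃(t)‖² ≤ ‖ẋ̃(0)‖²` and `λ‖∫₀ᵗ ẋ̃‖² ≤ ‖ẋ̃(0)‖²`. -/
theorem stmt3 (n : ℕ) (x xd : ℝ → EuclideanSpace ℝ (Fin n))
    (KP KD : Matrix (Fin n) (Fin n) ℝ) (lam : ℝ)
    (w : ℝ → EuclideanSpace ℝ (Fin n))
    (hx : Differentiable ℝ x) (hx' : Differentiable ℝ (deriv x))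
    (hxd : Differentiable ℝ xd) (hxd' : Differentiable ℝ (deriv xd))
    (hKPsymm : KP.IsSymm) (hKP : KP.PosDef)
    (hKDsymm : KD.IsSymm) (hKD : KD.PosDef)
    (hlam : 0 < lam)
    (hlow : ∀ v : EuclideanSpace ℝ (Fin n), lam * ‖v‖^2 ≤ ⟪v, Matrix.toEuclideanLin KP v⟫)
    (hw : Continuous w)
    (e z : ℝ → EuclideanSpace ℝ (Fin n))
    (he : ∀ t, e t = deriv x t - deriv xd t)
    (hz : ∀ t, z t = ∫ s in (0:ℝ)..t, e s)
    (hdyn : ∀ t, deriv (deriv x) t = deriv (deriv xd) t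
        - Matrix.toEuclideanLin KD (e t) - Matrix.toEuclideanLin KP (z t) + w t)
    (hhelp : ∀ t, 0 ≤ t → ⟪e t, w t⟫ ≤ 0)
    (V : ℝ → ℝ)
    (hV : ∀ t, V t = (1/2) * ‖e t‖^2
        + (1/2) * ⟪z t, Matrix.toEuclideanLin KP (z t)⟫) :
    AntitoneOn V (Set.Ici (0:ℝ)) ∧
      ∀ t, 0 ≤ t → ‖e t‖^2 ≤ ‖e 0‖^2 ∧ lam * ‖z t‖^2 ≤ ‖e 0‖^2 := by
  have hee : e = fun t => deriv x t - deriv xd t := funext he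
  have hediff : Differentiable ℝ e := by rw [hee]; exact hx'.sub hxd'
  have hecont : Continuous e := hediff.continuous
  -- derivative of z
  have hz_deriv : ∀ t, HasDerivAt z (e t) t := by
    intro t
    have hzfun : z = fun b => ∫ s in (0:ℝ)..b, e s := funext hz
    rw [hzfun]
    exact intervalIntegral.integral_hasDerivAt_right (hecont.intervalIntegrable _ _)
      (hecont.stronglyMeasurable.stronglyMeasurableAtFilter) hecont.continuousAt
  -- derivative of e
  have he_deriv : ∀ t, HasDerivAt e
      (w t - Matrix.toEuclideanLin KD (e t) - Matrix.toEuclideanLin KP (z t)) t := by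
    intro t
    have h := ((hx' t).hasDerivAt.sub (hxd' t).hasDerivAt)
    rw [show (deriv x - deriv xd) = e from funext fun t => (he t).symm] at h
    refine h.congr_deriv ?_
    rw [hdyn t]
    abel
  -- continuous linear map versions
  have hA_deriv : ∀ t, HasDerivAt (fun u => Matrix.toEuclideanLin KP (z u))
      (Matrix.toEuclideanLin KP (e t)) t := by
    intro t
    have h := (LinearMap.toContinuousLinearMap
        (Matrix.toEuclideanLin KP)).hasFDerivAt.comp_hasDerivAt t (hz_deriv t)
    exact h
  -- symmetry of KP
  have hsymm : ∀ u v : EuclideanSpace ℝ (Fin n),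
      ⟪u, Matrix.toEuclideanLin KP v⟫ = ⟪v, Matrix.toEuclideanLin KP u⟫ := by
    intro u v
    have hs : LinearMap.IsSymmetric (Matrix.toEuclideanLin KP) :=
      Matrix.isHermitian_iff_isSymmetric.mp hKPsymm
    rw [← hs u v, real_inner_comm]
  -- nonnegativity of quadratic forms
  have hKDnn : ∀ v : EuclideanSpace ℝ (Fin n),
      0 ≤ ⟪v, Matrix.toEuclideanLin KD v⟫ := by
    intro v
    have := hKD.posSemidef.re_dotProduct_nonneg ((WithLp.equiv 2 _) v)
    simpa [Matrix.toEuclideanLin_apply, EuclideanSpace.inner_eq_star_dotProduct,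
      dotProduct, mul_comm] using this
  -- derivative of V
  have hVder : ∀ t, HasDerivAt V
      (⟪e t, w t⟫ - ⟪e t, Matrix.toEuclideanLin KD (e t)⟫) t := by
    intro t
    have hVfun : V = fun u => (1/2) * ⟪e u, e u⟫
        + (1/2) * ⟪z u, Matrix.toEuclideanLin KP (z u)⟫ := by
      funext u
      rw [hV u, real_inner_self_eq_norm_sq]
    rw [hVfun]
    have h1 := (HasDerivAt.inner ℝ (he_deriv t) (he_deriv t)).const_mul (1/2 : ℝ)
    have h2 := (HasDerivAt.inner ℝ (hz_deriv t) (hA_deriv t)).const_mul (1/2 : ℝ)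
    have h := h1.add h2
    refine h.congr_deriv ?_
    rw [hsymm (z t) (e t)]
    have c2 : ⟪e t, w t - Matrix.toEuclideanLin KD (e t)
        - Matrix.toEuclideanLin KP (z t)⟫
        = ⟪e t, w t⟫ - ⟪e t, Matrix.toEuclideanLin KD (e t)⟫
          - ⟪e t, Matrix.toEuclideanLin KP (z t)⟫ := by
      rw [inner_sub_right, inner_sub_right]
    have c1 : ⟪w t - Matrix.toEuclideanLin KD (e t)
        - Matrix.toEuclideanLin KP (z t), e t⟫
        = ⟪e t, w t⟫ - ⟪e t, Matrix.toEuclideanLin KD (e t)⟫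
          - ⟪e t, Matrix.toEuclideanLin KP (z t)⟫ := by
      rw [real_inner_comm, inner_sub_right, inner_sub_right]
    rw [c2, c1]
    ring
  have hVdiff : Differentiable ℝ V := fun t => (hVder t).differentiableAt
  -- V is antitone on [0, ∞)
  have hant : AntitoneOn V (Set.Ici (0:ℝ)) := by
    apply antitoneOn_of_deriv_nonpos (convex_Ici 0) hVdiff.continuous.continuousOn
      (hVdiff.differentiableOn)
    intro t ht
    rw [interior_Ici] at ht
    rw [(hVder t).deriv]
    have h1 := hhelp t (le_of_lt ht)
    have h2 := hKDnn (e t)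
    linarith
  refine ⟨hant, fun t ht => ?_⟩
  have hz0 : z 0 = 0 := by rw [hz 0, intervalIntegral.integral_same]
  have hV0 : V 0 = (1/2) * ‖e 0‖^2 := by
    rw [hV 0, hz0]
    simp
  have hVt : V t ≤ V 0 := hant (Set.self_mem_Ici) ht ht
  have hq := hlow (z t)
  have hzn : (0:ℝ) ≤ lam * ‖z t‖^2 := by positivity
  have hen : (0:ℝ) ≤ ‖e t‖^2 := by positivity
  rw [hV t] at hVt
  rw [hV0] at hVt
  constructor <;> nlinarith
end

section
/- Let χ̃ : ℝ → ℝⁿ be a differentiable error curve, z(t) = ∫₀ᵗ χ̃(u) du, let K_d, K_p > 0 be scalar gains, K_D a symmetric positive definite real n×n matrix, and α : ℝ → ℝ continuous. Suppose the partner-aware closed loop holds for all t: K_d·χ̃′(t) + K_p·z(t) = −K_D·χ̃(t) − max(0, α(t))·(‖χ̃(t)‖⁻¹ · χ̃(t)) (with the convention that ‖χ̃(t)‖⁻¹·χ̃(t) = 0 when χ̃(t) = 0). Then the Lyapunov function V(t) = (K_d/2)‖χ̃(t)‖² + (K_p/2)‖z(t)‖² is differentiable with V′(t) = −⟨χ̃(t),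 K_D·χ̃(t)⟩ − max(0, α(t))·‖χ̃(t)‖, and in particular V′(t) ≤ 0 for every t. -/
open scoped RealInnerProductSpace

/-- Partner-aware closed loop
`K_d χ̃′(t) + K_p z(t) = −K_D χ̃(t) − max(0, α(t))·(χ̃(t)/‖χ̃(t)‖)` (with the convention
`χ̃/‖χ̃‖ = 0` when `χ̃ = 0`, which holds since `(0:ℝ)⁻¹ = 0` in Lean):
the Lyapunov function `V(t) = (K_d/2)‖χ̃(t)‖² + (K_p/2)‖z(t)‖²` is differentiable with
`V′(t) = −⟨χ̃(t), K_D χ̃(t)⟩ − max(0, α(t))·‖χ̃(t)‖ ≤ 0`. -/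
theorem stmt4 (n : ℕ) (χ : ℝ → EuclideanSpace ℝ (Fin n)) (Kd Kp : ℝ)
    (KD : Matrix (Fin n) (Fin n) ℝ) (α : ℝ → ℝ)
    (hχ : Differentiable ℝ χ) (hKd : 0 < Kd) (hKp : 0 < Kp)
    (hKDsymm : KD.IsSymm) (hKD : KD.PosDef) (hα : Continuous α)
    (z : ℝ → EuclideanSpace ℝ (Fin n))
    (hz : ∀ t, z t = ∫ s in (0:ℝ)..t, χ s)
    (hdyn : ∀ t, Kd • deriv χ t + Kp • z t
        = -(Matrix.toEuclideanLin KD (χ t)) - (max 0 (α t)) • ((‖χ t‖⁻¹) • χ t))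
    (V : ℝ → ℝ)
    (hV : ∀ t, V t = (Kd/2) * ‖χ t‖^2 + (Kp/2) * ‖z t‖^2) :
    Differentiable ℝ V ∧
      (∀ t, deriv V t = -⟪χ t, Matrix.toEuclideanLin KD (χ t)⟫
          - (max 0 (α t)) * ‖χ t‖) ∧
      ∀ t, deriv V t ≤ 0 := by
  have hzd : ∀ t, HasDerivAt z (χ t) t := by
    intro t
    have h := (hχ.continuous.integral_hasStrictDerivAt 0 t).hasDerivAt
    have : z = fun u => ∫ s in (0:ℝ)..u, χ s := funext hz
    rw [this]; exact h
  have hVd : ∀ t, HasDerivAt V (Kd * ⟪χ t, deriv χ t⟫ + Kp * ⟪z t, χ t⟫) t := by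
    intro t
    have h1 : HasDerivAt (fun u => ⟪χ u, χ u⟫) (2 * ⟪χ t, deriv χ t⟫) t := by
      have := ((hχ t).hasDerivAt).inner ℝ ((hχ t).hasDerivAt)
      exact this.congr_deriv (by rw [real_inner_comm]; ring)
    have h2 : HasDerivAt (fun u => ⟪z u, z u⟫) (2 * ⟪z t, χ t⟫) t := by
      have := (hzd t).inner ℝ (hzd t)
      exact this.congr_deriv (by rw [real_inner_comm]; ring)
    have hVeq : V = fun u => (Kd/2) * ⟪χ u, χ u⟫ + (Kp/2) * ⟪z u, z u⟫ := by
      funext u; rw [hV u, real_inner_self_eq_norm_sq, real_inner_self_eq_norm_sq]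
    rw [hVeq]
    have := (h1.const_mul (Kd/2)).add (h2.const_mul (Kp/2))
    exact this.congr_deriv (by ring)
  have key : ∀ t, Kd * ⟪χ t, deriv χ t⟫ + Kp * ⟪z t, χ t⟫
      = -⟪χ t, Matrix.toEuclideanLin KD (χ t)⟫ - (max 0 (α t)) * ‖χ t‖ := by
    intro t
    have : ⟪χ t, Kd • deriv χ t + Kp • z t⟫
        = ⟪χ t, -(Matrix.toEuclideanLin KD (χ t)) - (max 0 (α t)) • ((‖χ t‖⁻¹) • χ t)⟫ := by
      rw [hdyn t]
    rw [inner_add_right, inner_smul_right, inner_smul_right, inner_sub_right,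
      inner_neg_right, inner_smul_right, inner_smul_right,
      real_inner_self_eq_norm_sq] at this
    have hnorm : ‖χ t‖⁻¹ * ‖χ t‖ ^ 2 = ‖χ t‖ := by
      rcases eq_or_ne (‖χ t‖) 0 with h | h
      · simp [h]
      · field_simp
    rw [real_inner_comm (z t) (χ t)] at this
    rw [this, hnorm]
  have hdiff : Differentiable ℝ V := fun t => (hVd t).differentiableAt
  refine ⟨hdiff, fun t => ?_, fun t => ?_⟩
  · rw [(hVd t).deriv, key t]
  · rw [(hVd t).deriv, key t]
    have h1 : 0 ≤ ⟪χ t, Matrix.toEuclideanLin KD (χ t)⟫ := by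
      have := hKD.posSemidef.re_dotProduct_nonneg (x := ⇑(χ t))
      simpa [PiLp.inner_apply, Matrix.toEuclideanLin_apply, dotProduct,
        mul_comm] using this
    have h2 : 0 ≤ (max 0 (α t)) * ‖χ t‖ :=
      mul_nonneg (le_max_left _ _) (norm_nonneg _)
    linarith
end

section
/- Let χ̃ : ℝ → ℝⁿ be a differentiable error curve, z(t) = ∫₀ᵗ χ̃(u) du, let K_d, K_p > 0 be scalar gains, K_D a symmetric positive definite real n×n matrix, and α : ℝ → ℝ continuous. Suppose K_d·χ̃′(t) + K_p·z(t) = −K_D·χ̃(t) − max(0, α(t))·(‖χ̃(t)‖⁻¹ · χ̃(t)) for all t (with ‖χ̃(t)‖⁻¹·χ̃(t) = 0 when χ̃(t) = 0). Then the trajectories (χ̃, z) are globally bounded: for every t ≥ 0, (K_d/2)‖χ̃(t)‖² + (K_p/2)‖z(t)‖² ≤ (K_d/2)‖χ̃(0)‖²; in particular ‖χ̃(t)‖ ≤ ‖χ̃(0)‖ and ‖z(t)‖ ≤ √(K_d/K_p)·‖χ̃(0)‖ for all t ≥ 0, so the equilibrium point (χ̃, ∫χ̃) = (0, 0) is stable.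 -/
open scoped RealInnerProductSpace

/-- Partner-aware closed loop
`K_d χ̃′(t) + K_p z(t) = −K_D χ̃(t) − max(0, α(t))·(χ̃(t)/‖χ̃(t)‖)`:
the trajectories `(χ̃, z)` are globally bounded: for every `t ≥ 0`,
`(K_d/2)‖χ̃(t)‖² + (K_p/2)‖z(t)‖² ≤ (K_d/2)‖χ̃(0)‖²`, `‖χ̃(t)‖ ≤ ‖χ̃(0)‖` and
`‖z(t)‖ ≤ √(K_d/K_p)·‖χ̃(0)‖`, so the equilibrium `(χ̃, ∫χ̃) = (0,0)` is stable. -/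
theorem stmt5 (n : ℕ) (χ : ℝ → EuclideanSpace ℝ (Fin n)) (Kd Kp : ℝ)
    (KD : Matrix (Fin n) (Fin n) ℝ) (α : ℝ → ℝ)
    (hχ : Differentiable ℝ χ) (hKd : 0 < Kd) (hKp : 0 < Kp)
    (hKDsymm : KD.IsSymm) (hKD : KD.PosDef) (hα : Continuous α)
    (z : ℝ → EuclideanSpace ℝ (Fin n))
    (hz : ∀ t, z t = ∫ s in (0:ℝ)..t, χ s)
    (hdyn : ∀ t, Kd • deriv χ t + Kp • z t
        = -(Matrix.toEuclideanLin KD (χ t)) - (max 0 (α t)) • ((‖χ t‖⁻¹) • χ t)) :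
    ∀ t, 0 ≤ t →
      (Kd/2) * ‖χ t‖^2 + (Kp/2) * ‖z t‖^2 ≤ (Kd/2) * ‖χ 0‖^2 ∧
      ‖χ t‖ ≤ ‖χ 0‖ ∧
      ‖z t‖ ≤ Real.sqrt (Kd/Kp) * ‖χ 0‖ := by
  have hzf : z = fun t => ∫ s in (0:ℝ)..t, χ s := funext hz
  have hz' : ∀ t, HasDerivAt z (χ t) t := by
    intro t
    rw [hzf]
    exact (hχ.continuous.integral_hasStrictDerivAt 0 t).hasDerivAt
  set V : ℝ → ℝ := fun t => (Kd/2) * ⟪χ t, χ t⟫ + (Kp/2) * ⟪z t, z t⟫ with hV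
  have hVderiv : ∀ t, HasDerivAt V (⟪Kd • deriv χ t + Kp • z t, χ t⟫) t := by
    intro t
    have h1 : HasDerivAt (fun s => ⟪χ s, χ s⟫)
        (⟪χ t, deriv χ t⟫ + ⟪deriv χ t, χ t⟫) t :=
      (hχ t).hasDerivAt.inner ℝ (hχ t).hasDerivAt
    have h2 : HasDerivAt (fun s => ⟪z s, z s⟫) (⟪z t, χ t⟫ + ⟪χ t, z t⟫) t :=
      (hz' t).inner ℝ (hz' t)
    have := ((h1.const_mul (Kd/2)).add (h2.const_mul (Kp/2)))
    refine HasDerivAt.congr_deriv this ?_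
    symm
    rw [inner_add_left, inner_smul_left, inner_smul_left]
    simp only [RCLike.star_def, conj_trivial]
    rw [real_inner_comm (χ t) (deriv χ t), real_inner_comm (χ t) (z t)]
    ring
  have hVnonpos : ∀ t, deriv V t ≤ 0 := by
    intro t
    rw [(hVderiv t).deriv, hdyn t]
    rw [sub_eq_add_neg, inner_add_left, inner_neg_left, inner_neg_left,
      inner_smul_left, inner_smul_left]
    simp only [RCLike.star_def, conj_trivial]
    have hKDnn : 0 ≤ ⟪(Matrix.toEuclideanLin KD) (χ t), χ t⟫ := by
      have := hKD.posSemidef.dotProduct_mulVec_nonneg ((WithLp.equiv 2 (Fin n → ℝ)) (χ t))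
      rw [real_inner_comm, EuclideanSpace.inner_eq_star_dotProduct]
      simpa [Matrix.toEuclideanLin_apply, dotProduct_comm] using this
    have h2 : 0 ≤ max 0 (α t) * ((‖χ t‖⁻¹) * ⟪χ t, χ t⟫) :=
      mul_nonneg (le_max_left _ _)
        (mul_nonneg (inv_nonneg.2 (norm_nonneg _)) real_inner_self_nonneg)
    linarith
  have hVanti : AntitoneOn V (Set.Ici (0:ℝ)) := by
    apply antitoneOn_of_deriv_nonpos (convex_Ici 0)
    · exact (Differentiable.continuous fun t => (hVderiv t).differentiableAt).continuousOn
    · exact fun t _ => (hVderiv t).differentiableAt.differentiableWithinAt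
    · exact fun t _ => hVnonpos t
  intro t ht
  have hz0 : z 0 = 0 := by simp [hz 0]
  have hVle : V t ≤ V 0 := hVanti Set.self_mem_Ici ht ht
  have hVt : ∀ s, V s = (Kd/2) * ‖χ s‖^2 + (Kp/2) * ‖z s‖^2 := by
    intro s
    simp only [hV, real_inner_self_eq_norm_sq]
  have hV0 : V 0 = (Kd/2) * ‖χ 0‖^2 := by
    rw [hVt 0, hz0]
    simp
  rw [hVt t, hV0] at hVle
  refine ⟨hVle, ?_, ?_⟩
  · have h1 : ‖χ t‖^2 ≤ ‖χ 0‖^2 := by nlinarith [sq_nonneg ‖z t‖]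
    calc ‖χ t‖ = Real.sqrt (‖χ t‖^2) := (Real.sqrt_sq (norm_nonneg _)).symm
      _ ≤ Real.sqrt (‖χ 0‖^2) := Real.sqrt_le_sqrt h1
      _ = ‖χ 0‖ := Real.sqrt_sq (norm_nonneg _)
  · have h1 : ‖z t‖^2 ≤ (Kd/Kp) * ‖χ 0‖^2 := by
      rw [div_mul_eq_mul_div, le_div_iff₀ hKp]
      nlinarith [sq_nonneg ‖χ t‖]
    calc ‖z t‖ = Real.sqrt (‖z t‖^2) := by rw [Real.sqrt_sq (norm_nonneg _)]
      _ ≤ Real.sqrt ((Kd/Kp) * ‖χ 0‖^2) := Real.sqrt_le_sqrt h1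
      _ = Real.sqrt (Kd/Kp) * ‖χ 0‖ := by
          rw [Real.sqrt_mul (by positivity), Real.sqrt_sq (norm_nonneg _)]
end

section
/- Let a, b be vectors of an n-dimensional real Euclidean space with b ≠ 0, and let U be a real number with U ≥ 1 and U ≥ ⟨a, b⟩ / ‖b‖². Define the update rule s = min(U, max(1, ⟨a, b⟩ / ‖b‖²)). Then 1 ≤ s ≤ U and ⟨a − s·b, s·b⟩ ≤ 0. -/
open scoped RealInnerProductSpace

/-- Trajectory-advancement update rule `s = min(U, max(1, ⟨a,b⟩/‖b‖²))` with `U ≥ 1`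
and `U ≥ ⟨a,b⟩/‖b‖²`: then `1 ≤ s ≤ U` and `⟨a − s·b, s·b⟩ ≤ 0`. -/
theorem stmt7 (n : ℕ) (a b : EuclideanSpace ℝ (Fin n)) (hb : b ≠ 0) (U : ℝ)
    (hU1 : 1 ≤ U) (hU2 : ⟪a, b⟫ / ‖b‖^2 ≤ U)
    (s : ℝ) (hsdef : s = min U (max 1 (⟪a, b⟫ / ‖b‖^2))) :
    1 ≤ s ∧ s ≤ U ∧ ⟪a - s • b, s • b⟫ ≤ 0 := by
  set r := ⟪a, b⟫ / ‖b‖^2 with hr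
  have hs : s = max 1 r := by rw [hsdef, min_eq_right (max_le hU1 hU2)]
  have h1 : 1 ≤ s := hs ▸ le_max_left 1 r
  have hrs : r ≤ s := hs ▸ le_max_right 1 r
  refine ⟨h1, hsdef ▸ min_le_left _ _, ?_⟩
  have hbn : 0 < ‖b‖ := norm_pos_iff.mpr hb
  have hb2 : (0:ℝ) < ‖b‖^2 := by positivity
  have hab : ⟪a, b⟫ = r * ‖b‖^2 := by rw [hr, div_mul_cancel₀ _ hb2.ne']
  have : ⟪a - s • b, s • b⟫ = s * ‖b‖^2 * (r - s) := by
    rw [inner_sub_left, real_inner_smul_right, real_inner_smul_left,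
      real_inner_smul_right, real_inner_self_eq_norm_sq, hab]; ring
  rw [this]
  have : r - s ≤ 0 := by linarith
  nlinarith [mul_nonneg (mul_nonneg (by linarith : (0:ℝ) ≤ s) hb2.le) (by linarith : (0:ℝ) ≤ s - r)]
end

section
/- Let x, x_d : ℝ → ℝⁿ be twice differentiable curves with ẋ_d(t) ≠ 0 for all t, let K_P and K_D be symmetric positive definite real n×n matrices, and let α : ℝ → ℝ be continuous with α(t) > 0 for all t. Suppose the closed-loop dynamics with the correction term hold for all t: ẍ(t) = ẍ_d(t) − K_D·(ẋ(t) − ẋ_d(t)) − K_P·∫₀ᵗ (ẋ(u) − ẋ_d(u)) du + α(t)·(ẋ_d(t)/‖ẋ_d(t)‖), and that ⟨ẋ(t) − ẋ_d(t), ẋ_d(t)⟩ ≤ 0 for all t ≥ 0. Then the Lyapunov function V(t) = (1/2)‖ẋ(t) − ẋ_d(t)‖² + (1/2)⟨∫₀ᵗ (ẋ(u) − ẋ_d(u)) du, K_P·∫₀ᵗ (ẋ(u) − ẋ_d(u)) du⟩ satisfies V′(t) = −⟨ẋ(t) − ẋ_d(t), K_D·(ẋ(t) − ẋ_d(t))⟩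 + α(t)·⟨ẋ(t) − ẋ_d(t), ẋ_d(t)⟩/‖ẋ_d(t)‖ ≤ 0 for every t ≥ 0, so V is nonincreasing on [0, ∞). -/
open scoped RealInnerProductSpace

/-- Closed loop with correction term
`ẍ = ẍ_d − K_D ẋ̃ − K_P ∫₀ᵗ ẋ̃ + α(t)·ẋ_d/‖ẋ_d‖`, with `α(t) > 0` and
`⟨ẋ̃(t), ẋ_d(t)⟩ ≤ 0` for all `t ≥ 0`: the Lyapunov function
`V(t) = (1/2)‖ẋ̃(t)‖² + (1/2)⟨∫₀ᵗ ẋ̃, K_P ∫₀ᵗ ẋ̃⟩` satisfies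
`V′(t) = −⟨ẋ̃(t), K_D ẋ̃(t)⟩ + α(t)·⟨ẋ̃(t), ẋ_d(t)⟩/‖ẋ_d(t)‖ ≤ 0` for `t ≥ 0`,
so `V` is nonincreasing on `[0,∞)`. -/
theorem stmt8 (n : ℕ) (x xd : ℝ → EuclideanSpace ℝ (Fin n))
    (KP KD : Matrix (Fin n) (Fin n) ℝ) (α : ℝ → ℝ)
    (hx : Differentiable ℝ x) (hx' : Differentiable ℝ (deriv x))
    (hxd : Differentiable ℝ xd) (hxd' : Differentiable ℝ (deriv xd))
    (hxdne : ∀ t, deriv xd t ≠ 0)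
    (hKPsymm : KP.IsSymm) (hKP : KP.PosDef)
    (hKDsymm : KD.IsSymm) (hKD : KD.PosDef)
    (hα : Continuous α) (hαpos : ∀ t, 0 < α t)
    (e z : ℝ → EuclideanSpace ℝ (Fin n))
    (he : ∀ t, e t = deriv x t - deriv xd t)
    (hz : ∀ t, z t = ∫ s in (0:ℝ)..t, e s)
    (hdyn : ∀ t, deriv (deriv x) t = deriv (deriv xd) t
        - Matrix.toEuclideanLin KD (e t) - Matrix.toEuclideanLin KP (z t)
        + α t • ((‖deriv xd t‖⁻¹) • deriv xd t))
    (hhelp : ∀ t, 0 ≤ t → ⟪e t, deriv xd t⟫ ≤ 0)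
    (V : ℝ → ℝ)
    (hV : ∀ t, V t = (1/2) * ‖e t‖^2
        + (1/2) * ⟪z t, Matrix.toEuclideanLin KP (z t)⟫) :
    (∀ t, deriv V t = -⟪e t, Matrix.toEuclideanLin KD (e t)⟫
        + α t * ⟪e t, deriv xd t⟫ / ‖deriv xd t‖) ∧
    (∀ t, 0 ≤ t → deriv V t ≤ 0) ∧
    AntitoneOn V (Set.Ici (0:ℝ)) := by
  have heq : e = fun t => deriv x t - deriv xd t := funext he
  have hediff : Differentiable ℝ e := by rw [heq]; exact hx'.sub hxd'
  have hecont : Continuous e := hediff.continuous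
  -- z has derivative e
  have hzd : ∀ t, HasDerivAt z (e t) t := by
    intro t
    have : HasDerivAt (fun u => ∫ s in (0:ℝ)..u, e s) (e t) t :=
      intervalIntegral.integral_hasDerivAt_right
        (hecont.intervalIntegrable 0 t)
        (hecont.aestronglyMeasurable.stronglyMeasurableAtFilter)
        hecont.continuousAt
    exact this.congr_of_eventuallyEq (Filter.Eventually.of_forall fun u => (hz u))
  -- e has derivative
  set LP := Matrix.toEuclideanLin KP with hLP
  set LD := Matrix.toEuclideanLin KD with hLD
  have hed : ∀ t, HasDerivAt e
      (- LD (e t) - LP (z t) + α t • ((‖deriv xd t‖⁻¹) • deriv xd t)) t := by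
    intro t
    have h1 : HasDerivAt (deriv x) (deriv (deriv x) t) t :=
      (hx' t).hasDerivAt
    have h2 : HasDerivAt (deriv xd) (deriv (deriv xd) t) t :=
      (hxd' t).hasDerivAt
    have h3 := h1.sub h2
    rw [hdyn t] at h3
    have h4 : deriv (deriv xd) t - LD (e t) - LP (z t)
        + α t • ((‖deriv xd t‖⁻¹) • deriv xd t) - deriv (deriv xd) t
        = - LD (e t) - LP (z t) + α t • ((‖deriv xd t‖⁻¹) • deriv xd t) := by
      abel
    rw [h4] at h3
    exact h3.congr_of_eventuallyEq (Filter.Eventually.of_forall fun u => (he u))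
  -- continuity of LP, LD as continuous linear maps
  have hLPc : Continuous LP := LinearMap.continuous_of_finiteDimensional LP
  have hLDc : Continuous LD := LinearMap.continuous_of_finiteDimensional LD
  have hLPsym : ∀ u v : EuclideanSpace ℝ (Fin n), ⟪LP u, v⟫ = ⟪u, LP v⟫ :=
    Matrix.isHermitian_iff_isSymmetric.mp hKP.1
  -- derivative of V
  have hVd : ∀ t, HasDerivAt V
      (-⟪e t, LD (e t)⟫ + α t * ⟪e t, deriv xd t⟫ / ‖deriv xd t‖) t := by
    intro t
    set e' := - LD (e t) - LP (z t) + α t • ((‖deriv xd t‖⁻¹) • deriv xd t) with he'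
    have hA : HasDerivAt (fun u => ⟪e u, e u⟫) (⟪e t, e'⟫ + ⟪e', e t⟫) t :=
      (hed t).inner ℝ (hed t)
    have hLPz : HasDerivAt (fun u => LP (z u)) (LP (e t)) t := by
      have := (LP.toContinuousLinearMap.hasFDerivAt (x := z t)).comp_hasDerivAt t (hzd t)
      exact this
    have hB : HasDerivAt (fun u => ⟪z u, LP (z u)⟫)
        (⟪z t, LP (e t)⟫ + ⟪e t, LP (z t)⟫) t :=
      (hzd t).inner ℝ hLPz
    have hVeq : V = fun u => (1/2) * ⟪e u, e u⟫ + (1/2) * ⟪z u, LP (z u)⟫ := by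
      funext u
      rw [hV u, real_inner_self_eq_norm_sq]
    rw [hVeq]
    have := ((hA.const_mul (1/2 : ℝ)).add (hB.const_mul (1/2 : ℝ)))
    refine this.congr_deriv ?_
    have h5 : ⟪e', e t⟫ = ⟪e t, e'⟫ := real_inner_comm _ _
    have hsym : ⟪z t, LP (e t)⟫ = ⟪e t, LP (z t)⟫ := by
      rw [← hLPsym, real_inner_comm]
    have hinner : ⟪e t, e'⟫ = -⟪e t, LD (e t)⟫ - ⟪e t, LP (z t)⟫
        + α t * (‖deriv xd t‖⁻¹ * ⟪e t, deriv xd t⟫) := by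
      rw [he']
      simp only [inner_add_right, inner_sub_right, inner_smul_right,
        inner_neg_right, real_inner_smul_right]
    rw [h5, hsym, hinner]
    have hn : ‖deriv xd t‖ ≠ 0 := norm_ne_zero_iff.mpr (hxdne t)
    field_simp
    ring
  have hderiv : ∀ t, deriv V t = -⟪e t, LD (e t)⟫
      + α t * ⟪e t, deriv xd t⟫ / ‖deriv xd t‖ :=
    fun t => (hVd t).deriv
  have hpos : ∀ t, 0 ≤ ⟪e t, LD (e t)⟫ := by
    intro t
    rcases eq_or_ne (e t) 0 with h | h
    · simp [h]
    · have hw : (WithLp.equiv 2 (Fin n → ℝ)) (e t) ≠ 0 := by simpa using h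
      have hp := (hKD.dotProduct_mulVec_pos hw).le
      have heqd : ⟪e t, LD (e t)⟫ =
          dotProduct (star ((WithLp.equiv 2 (Fin n → ℝ)) (e t)))
            (KD.mulVec ((WithLp.equiv 2 (Fin n → ℝ)) (e t))) := by
        rw [EuclideanSpace.inner_eq_star_dotProduct, dotProduct_comm]
        rfl
      rw [heqd]; exact hp
  have hnonpos : ∀ t, 0 ≤ t → deriv V t ≤ 0 := by
    intro t ht
    rw [hderiv t]
    have h2 : α t * ⟪e t, deriv xd t⟫ / ‖deriv xd t‖ ≤ 0 :=
      div_nonpos_iff.mpr (Or.inr ⟨mul_nonpos_iff.mpr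
        (Or.inl ⟨(hαpos t).le, hhelp t ht⟩), norm_nonneg _⟩)
    have h1 := hpos t
    linarith
  refine ⟨hderiv, hnonpos, ?_⟩
  apply antitoneOn_of_deriv_nonpos (convex_Ici 0)
  · exact fun t _ => (hVd t).differentiableAt.continuousAt.continuousWithinAt
  · exact fun t _ => (hVd t).differentiableAt.differentiableWithinAt
  · intro t ht
    rw [interior_Ici] at ht
    exact hnonpos t ht.le
end

section
/- Let Σ_D (m×m), Σ_y (k×k), and Σ_d (n×n) be symmetric positive definite real matrices, D a real m×n matrix, Y a real k×n matrix, b_D ∈ ℝᵐ, b_Y, y ∈ ℝᵏ, and μ_d ∈ ℝⁿ. Define Σ̄_D = (Dᵀ Σ_D⁻¹ D + Σ_d⁻¹)⁻¹, μ̄_D = Σ̄_D (Σ_d⁻¹ μ_d − Dᵀ Σ_D⁻¹ b_D), Σ_{d|y} = (Σ̄_D⁻¹ + Yᵀ Σ_y⁻¹ Y)⁻¹, and μ_{d|y} = Σ_{d|y}(Yᵀ Σ_y⁻¹ (y − b_Y) + Σ̄_D⁻¹ μ̄_D). Then the weighted least-squares objective J(d) = (D d + b_D)ᵀ Σ_D⁻¹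 (D d + b_D) + (Y d + b_Y − y)ᵀ Σ_y⁻¹ (Y d + b_Y − y) + (d − μ_d)ᵀ Σ_d⁻¹ (d − μ_d) attains its global minimum over ℝⁿ at d = μ_{d|y}, and this minimizer is unique: J(μ_{d|y}) ≤ J(d) for all d, with equality only if d = μ_{d|y}. -/
open Matrix

lemma sq_expand {p q : ℕ} (M : Matrix (Fin p) (Fin p) ℝ) (hM : Mᵀ = M)
    (X : Matrix (Fin p) (Fin q) ℝ) (a : Fin p → ℝ) (e : Fin q → ℝ) :
    (a + X.mulVec e) ⬝ᵥ M.mulVec (a + X.mulVec e)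
      = a ⬝ᵥ M.mulVec a + 2 * (e ⬝ᵥ (Xᵀ * M).mulVec a) + e ⬝ᵥ (Xᵀ * M * X).mulVec e := by
  have hsym : ∀ v w : Fin p → ℝ, v ⬝ᵥ M.mulVec w = w ⬝ᵥ M.mulVec v := by
    intro v w
    rw [dotProduct_mulVec, ← vecMul_transpose, hM, dotProduct_comm]
  have hx : ∀ v : Fin p → ℝ, (X.mulVec e) ⬝ᵥ v = e ⬝ᵥ Xᵀ.mulVec v := by
    intro v
    rw [dotProduct_comm, dotProduct_mulVec, ← mulVec_transpose, dotProduct_comm]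
  rw [mulVec_add, dotProduct_add, add_dotProduct, add_dotProduct]
  rw [hsym a (X.mulVec e), hx (M.mulVec a), hx (M.mulVec (X.mulVec e))]
  rw [mulVec_mulVec, mulVec_mulVec, mulVec_mulVec, Matrix.mul_assoc]
  ring

/-- The MAP estimate of the dynamic variables is the unique global minimizer of the
weighted least-squares objective
`J(d) = (Dd+b_D)ᵀΣ_D⁻¹(Dd+b_D) + (Yd+b_Y−y)ᵀΣ_y⁻¹(Yd+b_Y−y) + (d−μ_d)ᵀΣ_d⁻¹(d−μ_d)`,
namely `d^MAP = μ_{d|y} = Σ_{d|y}(YᵀΣ_y⁻¹(y−b_Y) + Σ̄_D⁻¹ μ̄_D)` with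
`Σ̄_D = (DᵀΣ_D⁻¹D + Σ_d⁻¹)⁻¹`, `μ̄_D = Σ̄_D(Σ_d⁻¹μ_d − DᵀΣ_D⁻¹b_D)`, and
`Σ_{d|y} = (Σ̄_D⁻¹ + YᵀΣ_y⁻¹Y)⁻¹`. -/
theorem stmt11 (m k n : ℕ)
    (SigD : Matrix (Fin m) (Fin m) ℝ) (Sigy : Matrix (Fin k) (Fin k) ℝ)
    (Sigd : Matrix (Fin n) (Fin n) ℝ)
    (D : Matrix (Fin m) (Fin n) ℝ) (Y : Matrix (Fin k) (Fin n) ℝ)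
    (bD : Fin m → ℝ) (bY y : Fin k → ℝ) (mud : Fin n → ℝ)
    (hSigD : SigD.PosDef) (hSigy : Sigy.PosDef) (hSigd : Sigd.PosDef)
    (Sbar : Matrix (Fin n) (Fin n) ℝ) (mubar : Fin n → ℝ)
    (Sdy : Matrix (Fin n) (Fin n) ℝ) (mudy : Fin n → ℝ)
    (hSbar : Sbar = (Dᵀ * SigD⁻¹ * D + Sigd⁻¹)⁻¹)
    (hmubar : mubar = Sbar.mulVec (Sigd⁻¹.mulVec mud - (Dᵀ * SigD⁻¹).mulVec bD))
    (hSdy : Sdy = (Sbar⁻¹ + Yᵀ * Sigy⁻¹ * Y)⁻¹)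
    (hmudy : mudy = Sdy.mulVec ((Yᵀ * Sigy⁻¹).mulVec (y - bY) + Sbar⁻¹.mulVec mubar))
    (J : (Fin n → ℝ) → ℝ)
    (hJ : ∀ d, J d = (D.mulVec d + bD) ⬝ᵥ SigD⁻¹.mulVec (D.mulVec d + bD)
        + (Y.mulVec d + bY - y) ⬝ᵥ Sigy⁻¹.mulVec (Y.mulVec d + bY - y)
        + (d - mud) ⬝ᵥ Sigd⁻¹.mulVec (d - mud)) :
    (∀ d : Fin n → ℝ, J mudy ≤ J d) ∧
      (∀ d : Fin n → ℝ, J d = J mudy → d = mudy) := by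
  -- symmetry of the inverse covariances
  have hsymm : ∀ {p : ℕ} (S : Matrix (Fin p) (Fin p) ℝ), S.PosDef → S⁻¹ᵀ = S⁻¹ := by
    intro p S hS
    have := hS.inv.isHermitian
    rwa [Matrix.IsHermitian, conjTranspose_eq_transpose_of_trivial] at this
  have hSigDi := hsymm SigD hSigD
  have hSigyi := hsymm Sigy hSigy
  have hSigdi := hsymm Sigd hSigd
  -- congruence positive semidefiniteness
  set P : Matrix (Fin n) (Fin n) ℝ := Dᵀ * SigD⁻¹ * D + Sigd⁻¹ with hPdef
  have hDsd : (Dᵀ * SigD⁻¹ * D).PosSemidef := by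
    have := hSigD.inv.posSemidef.conjTranspose_mul_mul_same D
    rwa [conjTranspose_eq_transpose_of_trivial] at this
  have hYsd : (Yᵀ * Sigy⁻¹ * Y).PosSemidef := by
    have := hSigy.inv.posSemidef.conjTranspose_mul_mul_same Y
    rwa [conjTranspose_eq_transpose_of_trivial] at this
  have hP : P.PosDef := Matrix.PosDef.posSemidef_add hDsd hSigd.inv
  have hPdet : IsUnit P.det := (Matrix.isUnit_iff_isUnit_det _).1 hP.isUnit
  have hSbarInv : Sbar⁻¹ = P := by rw [hSbar, nonsing_inv_nonsing_inv _ hPdet]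
  set Q : Matrix (Fin n) (Fin n) ℝ := P + Yᵀ * Sigy⁻¹ * Y with hQdef
  have hQ : Q.PosDef := Matrix.PosDef.add_posSemidef hP hYsd
  have hQdet : IsUnit Q.det := (Matrix.isUnit_iff_isUnit_det _).1 hQ.isUnit
  have hSdyQ : Sdy = Q⁻¹ := by rw [hSdy, hSbarInv]
  have hmubarP : Sbar⁻¹.mulVec mubar = Sigd⁻¹.mulVec mud - (Dᵀ * SigD⁻¹).mulVec bD := by
    rw [hSbarInv, hmubar, hSbar, mulVec_mulVec, mul_nonsing_inv _ hPdet, one_mulVec]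
  have hQmudy : Q.mulVec mudy
      = (Yᵀ * Sigy⁻¹).mulVec (y - bY) + (Sigd⁻¹.mulVec mud - (Dᵀ * SigD⁻¹).mulVec bD) := by
    rw [hmudy, hSdyQ, mulVec_mulVec, mul_nonsing_inv _ hQdet, one_mulVec, hmubarP]
  have hkey : (Dᵀ * SigD⁻¹).mulVec (D.mulVec mudy + bD)
      + (Yᵀ * Sigy⁻¹).mulVec (Y.mulVec mudy + bY - y)
      + Sigd⁻¹.mulVec (mudy - mud) = 0 := by
    have hexp : (Dᵀ * SigD⁻¹).mulVec (D.mulVec mudy + bD)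
        + (Yᵀ * Sigy⁻¹).mulVec (Y.mulVec mudy + bY - y)
        + Sigd⁻¹.mulVec (mudy - mud)
        = Q.mulVec mudy
          - ((Yᵀ * Sigy⁻¹).mulVec (y - bY)
            + (Sigd⁻¹.mulVec mud - (Dᵀ * SigD⁻¹).mulVec bD)) := by
      simp only [hQdef, hPdef, mulVec_add, mulVec_sub, add_mulVec, mulVec_mulVec]
      abel
    rw [hexp, hQmudy, sub_self]
  -- the central identity
  have hmain : ∀ d : Fin n → ℝ,
      J d = J mudy + (d - mudy) ⬝ᵥ Q.mulVec (d - mudy) := by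
    intro d
    set e : Fin n → ℝ := d - mudy with he
    have hd : d = mudy + e := by rw [he]; abel
    have e1 : D.mulVec d + bD = (D.mulVec mudy + bD) + D.mulVec e := by
      rw [hd, mulVec_add]; abel
    have e2 : Y.mulVec d + bY - y = (Y.mulVec mudy + bY - y) + Y.mulVec e := by
      rw [hd, mulVec_add]; abel
    have e3 : d - mud = (mudy - mud) + (1 : Matrix (Fin n) (Fin n) ℝ).mulVec e := by
      rw [one_mulVec, hd]; abel
    rw [hJ d, hJ mudy, e1, e2, e3,
      sq_expand SigD⁻¹ hSigDi D _ e, sq_expand Sigy⁻¹ hSigyi Y _ e,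
      sq_expand Sigd⁻¹ hSigdi 1 _ e]
    rw [transpose_one, Matrix.one_mul, Matrix.mul_one]
    have hcross : e ⬝ᵥ (Dᵀ * SigD⁻¹).mulVec (D.mulVec mudy + bD)
        + e ⬝ᵥ (Yᵀ * Sigy⁻¹).mulVec (Y.mulVec mudy + bY - y)
        + e ⬝ᵥ Sigd⁻¹.mulVec (mudy - mud) = 0 := by
      rw [← dotProduct_add, ← dotProduct_add, hkey, dotProduct_zero]
    have hquad : e ⬝ᵥ (Dᵀ * SigD⁻¹ * D).mulVec e + e ⬝ᵥ (Yᵀ * Sigy⁻¹ * Y).mulVec e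
        + e ⬝ᵥ Sigd⁻¹.mulVec e = e ⬝ᵥ Q.mulVec e := by
      rw [← dotProduct_add, ← dotProduct_add, ← add_mulVec, ← add_mulVec]
      congr 2
      rw [hQdef, hPdef]; abel
    linear_combination 2 * hcross + hquad
  constructor
  · intro d
    have h0 : 0 ≤ (d - mudy) ⬝ᵥ Q.mulVec (d - mudy) := by
      have := hQ.posSemidef.dotProduct_mulVec_nonneg (d - mudy)
      simpa using this
    rw [hmain d]; linarith
  · intro d heq
    by_contra hne
    have hne' : d - mudy ≠ 0 := sub_ne_zero.mpr hne
    have hpos : 0 < (d - mudy) ⬝ᵥ Q.mulVec (d - mudy) := by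
      have := hQ.dotProduct_mulVec_pos hne'
      simpa using this
    have := hmain d
    rw [heq] at this
    linarith
end
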